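/- Let Λ be a zero/one-weighted graph. Then every reduced cycle in Λ has weight at least 2 if and only if the following two conditions hold: (i) Λ_0 is a forest, and (ii) no edge of weight 1 has both of its endpoints in a single connected component of Λ_0. (This is the link-level content, at each vertex, of the equivalence between the coloring test and its reformulation for zero/one-angled 2-complexes.) -/

import Mathlib

/-- A combinatorial graph (Serre style): edges come with a fixed-point-free
reversal involution; loops and multiple edges are allowed. -/
structure SGraph where
  V : Type
  E : Type
  init : E → V
  bar : E → E
  bar_bar : ∀ e, bar (bar e) = e
  bar_ne : ∀ e, bar e ≠ e

namespace SGraph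

variable (G : SGraph)

/-- Terminal vertex of an edge. -/
def term (e : G.E) : G.V := G.init (G.bar e)

/-- Consecutive edges of the list match up. -/
def IsChain (l : List G.E) : Prop :=
  List.Chain' (fun e f => G.term e = G.init f) l

/-- A cycle: a nonempty closed edge path. -/
def IsCycle (l : List G.E) : Prop :=
  l ≠ [] ∧ G.IsChain l ∧
    ∀ e f, l.head? = some e → l.getLast? = some f → G.term f = G.init e

/-- A reduced cycle: no edge is followed (cyclically) by its reverse. -/
def IsReducedCycle (l : List G.E) : Prop :=
  G.IsCycle l ∧ List.Chain' (fun e f => f ≠ G.bar e) l ∧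
    ∀ e f, l.head? = some e → l.getLast? = some f → e ≠ G.bar f

/-- A graph is a forest if it contains no reduced cycle. -/
def IsForestGraph : Prop := ∀ l, ¬ G.IsReducedCycle l

/-- A subgraph: a set of vertices and a set of edges, closed under reversal,
with endpoints among the chosen vertices. -/
structure Subgraph (G : SGraph) where
  verts : Set G.V
  edges : Set G.E
  bar_mem : ∀ ⦃e⦄, e ∈ edges → G.bar e ∈ edges
  init_mem : ∀ ⦃e⦄, e ∈ edges → G.init e ∈ verts

variable {G}

namespace Subgraph

/-- Subgraph containment. -/
def le (H K : Subgraph G) : Prop := H.verts ⊆ K.verts ∧ H.edges ⊆ K.edges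

/-- Intersection of two subgraphs. -/
def inter (H K : Subgraph G) : Subgraph G where
  verts := H.verts ∩ K.verts
  edges := H.edges ∩ K.edges
  bar_mem := fun _ he => ⟨H.bar_mem he.1, K.bar_mem he.2⟩
  init_mem := fun _ he => ⟨H.init_mem he.1, K.init_mem he.2⟩

/-- All edges of the list lie in the subgraph. -/
def EdgesIn (H : Subgraph G) (l : List G.E) : Prop := ∀ e ∈ l, e ∈ H.edges

/-- A reduced cycle contained in the subgraph. -/
def IsReducedCycleIn (H : Subgraph G) (l : List G.E) : Prop :=
  G.IsReducedCycle l ∧ H.EdgesIn l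

/-- A subgraph is a forest if it contains no reduced cycle. -/
def IsForest (H : Subgraph G) : Prop := ∀ l, ¬ H.IsReducedCycleIn l

/-- Reachability inside a subgraph by edge paths. -/
inductive Reaches (H : Subgraph G) : G.V → G.V → Prop
  | refl (v : G.V) (hv : v ∈ H.verts) : Reaches H v v
  | step (e : G.E) (he : e ∈ H.edges) {q : G.V} (h : Reaches H (G.term e) q) :
      Reaches H (G.init e) q

/-- A subgraph is connected if it is nonempty and any two of its vertices are
joined by an edge path in it. -/
def Connected (H : Subgraph G) : Prop :=
  H.verts.Nonempty ∧ ∀ p ∈ H.verts, ∀ q ∈ H.verts, H.Reaches p q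

/-- A tree is a connected forest. -/
def IsTree (H : Subgraph G) : Prop := H.IsForest ∧ H.Connected

/-- `C` is a connected component of `H`: its vertices form a reachability class
of `H` and its edges are the induced ones. -/
def IsCompOf (C H : Subgraph G) : Prop :=
  ∃ v ∈ H.verts, C.verts = {w | H.Reaches v w} ∧
    C.edges = {e | e ∈ H.edges ∧ G.init e ∈ C.verts}

/-- `H` is a forest relative to `H'`: every reduced cycle of `H` is contained
in `H'`. -/
def ForestRel (H H' : Subgraph G) : Prop :=
  ∀ l, H.IsReducedCycleIn l → H'.EdgesIn l

/-- `H` is a strong forest relative to `H'`: a relative forest such that each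
component of `H` meets `H'` in an empty or connected subgraph. -/
def StrongForestRel (H H' : Subgraph G) : Prop :=
  H.ForestRel H' ∧
    ∀ C : Subgraph G, C.IsCompOf H → (C.inter H').verts = ∅ ∨ (C.inter H').Connected

/-- Euler characteristic: number of vertices minus number of (geometric)
edges; each geometric edge corresponds to a pair `{e, ē}`. -/
noncomputable def eulerChar (H : Subgraph G) : ℤ :=
  (H.verts.ncard : ℤ) - ((H.edges.ncard / 2 : ℕ) : ℤ)

/-- A walk in `H` from `p` to `q`, given as its list of traversed edges. -/
def IsWalk (H : Subgraph G) (p q : G.V) (l : List G.E) : Prop :=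
  H.EdgesIn l ∧ G.IsChain l ∧
    (∀ e, l.head? = some e → G.init e = p) ∧
    (∀ e, l.getLast? = some e → G.term e = q) ∧
    (l = [] → p = q ∧ p ∈ H.verts)

/-- The weight-0 subgraph of a zero/one-weighted subgraph: all of its vertices
together with its edges of weight 0. -/
def zeroSub (H : Subgraph G) (ω : G.E → ℕ) (hbar : ∀ e, ω (G.bar e) = ω e) :
    Subgraph G where
  verts := H.verts
  edges := {e | e ∈ H.edges ∧ ω e = 0}
  bar_mem := fun e he => ⟨H.bar_mem he.1, by rw [hbar]; exact he.2⟩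
  init_mem := fun _ he => H.init_mem he.1

end Subgraph

/-- The full subgraph of a graph. -/
def full (G : SGraph) : Subgraph G where
  verts := Set.univ
  edges := Set.univ
  bar_mem := fun _ _ => Set.mem_univ _
  init_mem := fun _ _ => Set.mem_univ _

open Classical in
/-- The quotient graph `G/H'` obtained by identifying the subgraph `H'` to a
single vertex `∗` (represented by `none`): its vertices are the vertices of
`G` not in `H'` together with `∗`; its edges are the edges of `G` not in `H'`,
with endpoints in `H'` replaced by `∗`. -/
noncomputable def quot (G : SGraph) (H' : Subgraph G) : SGraph where
  V := Option {v : G.V // v ∉ H'.verts}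
  E := {e : G.E // e ∉ H'.edges}
  init e := if h : G.init e.1 ∈ H'.verts then none else some ⟨G.init e.1, h⟩
  bar e := ⟨G.bar e.1, fun hc => e.2 (by simpa [G.bar_bar] using H'.bar_mem hc)⟩
  bar_bar e := Subtype.ext (G.bar_bar e.1)
  bar_ne e := fun hc => G.bar_ne e.1 (congrArg Subtype.val hc)

variable {G : SGraph}

lemma term_bar (e : G.E) : G.term (G.bar e) = G.init e := by
  simp [term, G.bar_bar]

namespace Subgraph

lemma Reaches.trans {H : Subgraph G} {p q r : G.V} (h1 : H.Reaches p q)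
    (h2 : H.Reaches q r) : H.Reaches p r := by
  induction h1 with
  | refl v hv => exact h2
  | step e he h ih => exact .step e he (ih h2)

lemma Reaches.single {H : Subgraph G} {e : G.E} (he : e ∈ H.edges) :
    H.Reaches (G.init e) (G.term e) :=
  .step e he (.refl _ (H.init_mem (H.bar_mem he)))

lemma Reaches.symm {H : Subgraph G} {p q : G.V} (h : H.Reaches p q) :
    H.Reaches q p := by
  induction h with
  | refl v hv => exact .refl v hv
  | step e he h ih =>
    refine ih.trans ?_
    have : H.Reaches (G.init (G.bar e)) (G.term (G.bar e)) :=
      .single (H.bar_mem he)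
    rw [SGraph.term_bar] at this
    exact this

lemma reaches_of_chain {H : Subgraph G} {m : List G.E} (hne : m ≠ [])
    (hE : ∀ e ∈ m, e ∈ H.edges) (hC : G.IsChain m) :
    H.Reaches (G.init (m.head hne)) (G.term (m.getLast hne)) := by
  induction m with
  | nil => exact absurd rfl hne
  | cons e t ih =>
    cases t with
    | nil => exact .single (hE e (by simp))
    | cons f t' =>
      obtain ⟨h1, h2⟩ := List.isChain_cons_cons.mp hC
      have key := ih (by simp) (fun x hx => hE x (by simp [hx])) h2
      refine .step e (hE e (by simp)) ?_
      rw [List.getLast_cons (by simp)]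
      rw [show G.term e = G.init ((f :: t').head (by simp)) from h1]
      exact key

lemma exists_reducedWalk {H : Subgraph G} {p q : G.V} (h : H.Reaches p q) :
    ∃ l, H.IsWalk p q l ∧ List.Chain' (fun e f => f ≠ G.bar e) l := by
  induction h with
  | refl v hv =>
    exact ⟨[], ⟨fun e he => absurd he (List.not_mem_nil), List.isChain_nil,
      by simp, by simp, fun _ => ⟨rfl, hv⟩⟩, List.isChain_nil⟩
  | step e he h ih =>
    obtain ⟨l, ⟨hE, hCh, hHd, hLs, hNil⟩, hRed⟩ := ih
    cases l with
    | nil =>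
      obtain ⟨hq, _⟩ := hNil rfl
      refine ⟨[e], ⟨fun x hx => by rw [List.mem_singleton] at hx; subst hx; exact he,
        List.isChain_singleton e, ?_, ?_, by simp⟩, List.isChain_singleton e⟩
      · intro x hx; simp at hx; subst hx; rfl
      · intro x hx; simp at hx; subst hx; exact hq
    | cons f t =>
      by_cases hfe : f = G.bar e
      · subst hfe
        refine ⟨t, ⟨fun x hx => hE x (by simp [hx]), hCh.tail, ?_, ?_, ?_⟩,
          hRed.tail⟩
        · intro x hx
          cases t with
          | nil => simp at hx
          | cons g t' =>
            simp at hx; subst hx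
            have := (List.isChain_cons_cons.mp hCh).1
            rw [SGraph.term_bar] at this
            exact this.symm
        · intro x hx
          cases t with
          | nil => simp at hx
          | cons g t' =>
            exact hLs x (by rw [List.getLast?_cons_cons]; exact hx)
        · intro ht; subst ht
          have hq := hLs (G.bar e) rfl
          rw [SGraph.term_bar] at hq
          exact ⟨hq, H.init_mem he⟩
      · have hif : G.init f = G.term e := hHd f rfl
        refine ⟨e :: f :: t, ⟨?_, List.isChain_cons_cons.mpr ⟨hif.symm, hCh⟩, ?_, ?_, by simp⟩,
          List.isChain_cons_cons.mpr ⟨hfe, hRed⟩⟩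
        · intro x hx
          rcases List.mem_cons.mp hx with h' | h'
          · subst h'; exact he
          · exact hE x h'
        · intro x hx; simp at hx; subst hx; rfl
        · intro x hx
          rw [List.getLast?_cons_cons] at hx
          exact hLs x hx

end Subgraph

end SGraph

/-- In a zero/one-weighted graph, every reduced cycle has weight
at least 2 if and only if (i) the weight-0 subgraph `Λ₀` is a forest and
(ii) no edge of weight 1 has both of its endpoints in a single connected
component of `Λ₀`. -/
theorem coloring_test_link_equiv
    (G : SGraph) [Fintype G.V] [Fintype G.E]
    (ω : G.E → ℕ) (h01 : ∀ e, ω e = 0 ∨ ω e = 1)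
    (hbar : ∀ e, ω (G.bar e) = ω e) :
    (∀ l, G.IsReducedCycle l → 2 ≤ (l.map ω).sum) ↔
      ((G.full.zeroSub ω hbar).IsForest ∧
        ∀ e : G.E, ω e = 1 →
          ¬ ∃ C : SGraph.Subgraph G, C.IsCompOf (G.full.zeroSub ω hbar) ∧
              G.init e ∈ C.verts ∧ G.term e ∈ C.verts) := by
  set H0 := G.full.zeroSub ω hbar with hH0
  have hmemE : ∀ e : G.E, e ∈ H0.edges ↔ ω e = 0 := by
    intro e
    constructor
    · exact fun h => h.2
    · exact fun h => ⟨Set.mem_univ _, h⟩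
  have hmemV : ∀ v : G.V, v ∈ H0.verts := fun v => Set.mem_univ v
  constructor
  · intro h
    constructor
    · -- Λ₀ is a forest
      rintro l ⟨hred, hedges⟩
      have h2 := h l hred
      have hzero : (l.map ω).sum = 0 := by
        apply List.sum_eq_zero
        intro x hx
        obtain ⟨f, hf, rfl⟩ := List.mem_map.mp hx
        exact ((hmemE f).mp (hedges f hf))
      omega
    · -- no weight-1 edge within a component
      rintro e he1 ⟨C, hC, hie, hte⟩
      obtain ⟨v, hv, hverts, hedgesC⟩ := hC
      rw [hverts] at hie hte
      have r : H0.Reaches (G.term e) (G.init e) :=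
        (SGraph.Subgraph.Reaches.symm hte).trans hie
      obtain ⟨p, ⟨pE, pCh, pHd, pLs, pNil⟩, pRed⟩ :=
        SGraph.Subgraph.exists_reducedWalk r
      have hcyc : G.IsReducedCycle (e :: p) := by
        refine ⟨⟨by simp, ?_, ?_⟩, ?_, ?_⟩
        · exact List.isChain_cons.mpr
            ⟨fun f hf => (pHd f hf).symm, pCh⟩
        · intro x y hx hy
          simp only [List.head?_cons, Option.some.injEq] at hx
          subst hx
          cases p with
          | nil =>
            simp only [List.getLast?_singleton, Option.some.injEq] at hy
            subst hy
            exact (pNil rfl).1 ▸ rfl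
          | cons g p' =>
            rw [List.getLast?_cons_cons] at hy
            exact pLs y hy
        · refine List.isChain_cons.mpr ⟨?_, pRed⟩
          intro f hf
          have hfp : f ∈ p := List.mem_of_mem_head? hf
          have hf0 : ω f = 0 := (hmemE f).mp (pE f hfp)
          intro hc
          rw [hc, hbar] at hf0
          omega
        · intro x y hx hy
          simp only [List.head?_cons, Option.some.injEq] at hx
          subst hx
          cases p with
          | nil =>
            simp only [List.getLast?_singleton, Option.some.injEq] at hy
            subst hy
            exact fun hc => G.bar_ne _ hc.symm
          | cons g p' =>
            rw [List.getLast?_cons_cons] at hy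
            have hyne : (g :: p') ≠ [] := by simp
            have hym : y ∈ g :: p' := by
              rw [List.getLast?_eq_getLast hyne] at hy
              exact (Option.some.injEq _ _).mp hy ▸ List.getLast_mem hyne
            have hy0 : ω y = 0 := (hmemE y).mp (pE y hym)
            intro hc
            rw [hc, hbar] at he1
            omega
      have h2 := h (e :: p) hcyc
      have hzero : (p.map ω).sum = 0 := by
        apply List.sum_eq_zero
        intro x hx
        obtain ⟨f, hf, rfl⟩ := List.mem_map.mp hx
        exact (hmemE f).mp (pE f hf)
      simp only [List.map_cons, List.sum_cons, he1, hzero] at h2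
      omega
  · rintro ⟨hforest, hsep⟩ l hl
    by_contra hlt
    push_neg at hlt
    obtain ⟨⟨hne, hch, hclose⟩, hred, hredclose⟩ := hl
    by_cases hall : ∀ e ∈ l, ω e = 0
    · exact hforest l ⟨⟨⟨hne, hch, hclose⟩, hred, hredclose⟩,
        fun f hf => (hmemE f).mpr (hall f hf)⟩
    · push_neg at hall
      obtain ⟨e, hel, hene⟩ := hall
      have he1 : ω e = 1 := (h01 e).resolve_left hene
      obtain ⟨a, b, rfl⟩ := List.append_of_mem hel
      -- all other edges have weight 0
      have hsum : ((a ++ e :: b).map ω).sum = (a.map ω).sum + ω e + (b.map ω).sum := by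
        simp [List.sum_append]
        omega
      have ha0 : ∀ f ∈ a, ω f = 0 := by
        intro f hf
        have : ω f ≤ (a.map ω).sum := List.single_le_sum (by simp) _ (List.mem_map_of_mem (f := ω) hf)
        omega
      have hb0 : ∀ f ∈ b, ω f = 0 := by
        intro f hf
        have : ω f ≤ (b.map ω).sum := List.single_le_sum (by simp) _ (List.mem_map_of_mem (f := ω) hf)
        omega
      -- chain structure
      rw [SGraph.IsChain, List.Chain', List.isChain_append] at hch
      obtain ⟨hchA, hchEB, hjoin⟩ := hch
      rw [List.isChain_cons] at hchEB
      obtain ⟨hEB1, hchB⟩ := hchEB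
      -- the key reachability
      have hreach : H0.Reaches (G.term e) (G.init e) := by
        cases hb : b with
        | nil =>
          subst hb
          have hlast : (a ++ [e]).getLast? = some e := by
            rw [List.getLast?_append_of_ne_nil _ (by simp)]
            simp
          cases ha : a with
          | nil =>
            subst ha
            have := hclose e e rfl rfl
            rw [this]
            exact .refl _ (hmemV _)
          | cons a0 a' =>
            subst ha
            have hhead : ((a0 :: a') ++ [e]).head? = some a0 := by simp
            have h1 : G.term e = G.init a0 := hclose a0 e hhead hlast
            have h2 := SGraph.Subgraph.reaches_of_chain (H := H0) (m := a0 :: a')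
              (by simp) (fun f hf => (hmemE f).mpr (ha0 f hf)) hchA
            have h3 : G.term ((a0 :: a').getLast (by simp)) = G.init e := by
              apply hjoin
              · rw [List.getLast?_eq_getLast (by simp)]; rfl
              · simp
            rw [h1]
            rw [← h3]
            exact h2
        | cons b0 b' =>
          subst hb
          have h1 : G.term e = G.init b0 := hEB1 b0 rfl
          have h2 := SGraph.Subgraph.reaches_of_chain (H := H0) (m := b0 :: b')
            (by simp) (fun f hf => (hmemE f).mpr (hb0 f hf)) hchB
          have hlastl : (a ++ e :: b0 :: b').getLast? = some ((b0 :: b').getLast (by simp)) := by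
            rw [List.getLast?_append_of_ne_nil _ (by simp)]
            rw [show (e :: b0 :: b').getLast? = (b0 :: b').getLast? from List.getLast?_cons_cons ..]
            rw [List.getLast?_eq_getLast (by simp)]
          cases ha : a with
          | nil =>
            subst ha
            have h4 : G.term ((b0 :: b').getLast (by simp)) = G.init e :=
              hclose e _ rfl hlastl
            rw [h1, ← h4]
            exact h2
          | cons a0 a' =>
            subst ha
            have hhead : ((a0 :: a') ++ e :: b0 :: b').head? = some a0 := by simp
            have h4 : G.term ((b0 :: b').getLast (by simp)) = G.init a0 :=
              hclose a0 _ hhead hlastl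
            have h5 := SGraph.Subgraph.reaches_of_chain (H := H0) (m := a0 :: a')
              (by simp) (fun f hf => (hmemE f).mpr (ha0 f hf)) hchA
            have h6 : G.term ((a0 :: a').getLast (by simp)) = G.init e := by
              apply hjoin
              · rw [List.getLast?_eq_getLast (by simp)]; rfl
              · simp
            rw [h1]
            have h2' : H0.Reaches (G.init b0) (G.init a0) := by
              rw [← h4]; exact h2
            have h5' : H0.Reaches (G.init a0) (G.init e) := by
              rw [← h6]; exact h5
            exact h2'.trans h5'
      -- build the component containing term e
      refine hsep e he1 ⟨⟨{w | H0.Reaches (G.term e) w},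
        {f | f ∈ H0.edges ∧ G.init f ∈ {w | H0.Reaches (G.term e) w}}, ?_, ?_⟩,
        ⟨G.term e, hmemV _, rfl, rfl⟩, hreach, .refl _ (hmemV _)⟩
      · rintro f ⟨hf, hrf⟩
        exact ⟨H0.bar_mem hf, hrf.trans (SGraph.Subgraph.Reaches.single hf)⟩
      · rintro f ⟨hf, hrf⟩
        exact hrf
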